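/- Let V be a finite-dimensional complex inner product space, ψ ∈ V a unit vector with rank-one projection P = |ψ⟩⟨ψ|, and let U₁, …, U_m be operators on V (m ≥ 1). For 1 ≤ i ≤ m set p_i = ⟨ψ, U_i ψ⟩, and for 1 ≤ i ≤ m − 1 set q_i = ⟨ψ, U_m U_{m−1} ⋯ U_{i+1} (I − P) U_i ψ⟩. Then ⟨ψ, U_m U_{m−1} ⋯ U₁ ψ⟩ − ∏_{i=1}^{m} p_i = ∑_{i=1}^{m−1} ( ∏_{j=1}^{i−1} p_j ) q_i. -/

import Mathlib

open scoped ComplexInnerProductSpace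

/-- The ordered product `U (b-1) * U (b-2) * ⋯ * U a` of operators (acting as the
composition which applies `U a` first). Empty if `b ≤ a`. -/
noncomputable def ordProd {V : Type*} [NormedAddCommGroup V] [InnerProductSpace ℂ V]
    (U : ℕ → V →L[ℂ] V) (a b : ℕ) : V →L[ℂ] V :=
  (((List.range' a (b - a)).reverse.map U).prod)

lemma ordProd_self {V : Type*} [NormedAddCommGroup V] [InnerProductSpace ℂ V]
    (U : ℕ → V →L[ℂ] V) (a : ℕ) : ordProd U a a = 1 := by
  simp [ordProd]

lemma ordProd_cons {V : Type*} [NormedAddCommGroup V] [InnerProductSpace ℂ V]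
    (U : ℕ → V →L[ℂ] V) {a b : ℕ} (h : a < b) :
    ordProd U a b = ordProd U (a + 1) b * U a := by
  unfold ordProd
  have h1 : b - a = (b - (a + 1)) + 1 := by omega
  rw [h1, List.range'_succ]
  simp

lemma inner_split {V : Type*} [NormedAddCommGroup V] [InnerProductSpace ℂ V]
    (ψ : V) (T : V →L[ℂ] V) (x : V) :
    ⟪ψ, T x⟫ = ⟪ψ, x⟫ * ⟪ψ, T ψ⟫ + ⟪ψ, T (x - ⟪ψ, x⟫ • ψ)⟫ := by
  rw [map_sub, map_smul, inner_sub_right, inner_smul_right]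
  ring

lemma aux {V : Type*} [NormedAddCommGroup V] [InnerProductSpace ℂ V]
    (ψ : V) (hψ : ‖ψ‖ = 1) (U : ℕ → V →L[ℂ] V) (b : ℕ) :
    ∀ n a, a + n = b →
    ⟪ψ, (ordProd U a b) ψ⟫ - ∏ i ∈ Finset.Ico a b, ⟪ψ, U i ψ⟫ =
      ∑ i ∈ Finset.Ico a (b - 1),
        (∏ j ∈ Finset.Ico a i, ⟪ψ, U j ψ⟫) *
          ⟪ψ, (ordProd U (i + 1) b) (U i ψ - ⟪ψ, U i ψ⟫ • ψ)⟫ := by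
  have hψ1 : ⟪ψ, ψ⟫ = 1 := by
    rw [inner_self_eq_norm_sq_to_K, hψ]; norm_num
  intro n
  induction n with
  | zero =>
    intro a ha
    have hb : a = b := by omega
    subst hb
    simp [ordProd_self, hψ1, hψ, show a - 1 ≤ a by omega, Finset.Ico_eq_empty_of_le]
  | succ n ih =>
    intro a ha
    have hab : a < b := by omega
    have key : ⟪ψ, (ordProd U a b) ψ⟫ =
        ⟪ψ, U a ψ⟫ * ⟪ψ, (ordProd U (a + 1) b) ψ⟫ +
          ⟪ψ, (ordProd U (a + 1) b) (U a ψ - ⟪ψ, U a ψ⟫ • ψ)⟫ := by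
      rw [ordProd_cons U hab]
      simpa using inner_split ψ (ordProd U (a + 1) b) (U a ψ)
    have ihh := ih (a + 1) (by omega)
    rcases Nat.eq_or_lt_of_le (Nat.succ_le_of_lt hab) with hb1 | hb2
    · -- b = a + 1
      subst hb1
      rw [key, ordProd_self]
      simp [hψ1, Finset.Ico_eq_empty_of_le, Finset.prod_Ico_succ_top, inner_sub_right,
        inner_smul_right, Finset.sum_Ico_eq_sum_range]
    · -- a + 1 < b
      rw [key, Finset.prod_eq_prod_Ico_succ_bot hab,
        Finset.sum_eq_sum_Ico_succ_bot (show a < b - 1 by omega)]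
      have hsum : ∑ i ∈ Finset.Ico (a+1) (b-1),
          (∏ j ∈ Finset.Ico a i, ⟪ψ, U j ψ⟫) *
            ⟪ψ, (ordProd U (i + 1) b) (U i ψ - ⟪ψ, U i ψ⟫ • ψ)⟫ =
          ⟪ψ, U a ψ⟫ * ∑ i ∈ Finset.Ico (a+1) (b-1),
          (∏ j ∈ Finset.Ico (a+1) i, ⟪ψ, U j ψ⟫) *
            ⟪ψ, (ordProd U (i + 1) b) (U i ψ - ⟪ψ, U i ψ⟫ • ψ)⟫ := by
        rw [Finset.mul_sum]
        refine Finset.sum_congr rfl fun i hi => ?_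
        have hi' : a < i := by
          have := (Finset.mem_Ico.mp hi).1; omega
        rw [Finset.prod_eq_prod_Ico_succ_bot hi']
        ring
      rw [hsum, ← ihh]
      simp only [Finset.Ico_self, Finset.prod_empty, one_mul]
      ring

/-- Telescoping identity:
`⟪ψ, U_m ⋯ U_1 ψ⟫ − ∏ p_i = ∑_{i=1}^{m-1} (∏_{j<i} p_j) q_i`, where
`p_i = ⟪ψ, U_i ψ⟫` and `q_i = ⟪ψ, U_m ⋯ U_{i+1} (I − P) U_i ψ⟫`, `P = |ψ⟩⟨ψ|`.
(Here the operators are indexed `0, …, m-1`.) -/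
theorem telescoping_groundstate_projections
    {V : Type*} [NormedAddCommGroup V] [InnerProductSpace ℂ V] [FiniteDimensional ℂ V]
    (ψ : V) (hψ : ‖ψ‖ = 1) (m : ℕ) (hm : 1 ≤ m) (U : ℕ → V →L[ℂ] V) :
    ⟪ψ, (ordProd U 0 m) ψ⟫ - ∏ i ∈ Finset.range m, ⟪ψ, U i ψ⟫ =
      ∑ i ∈ Finset.range (m - 1),
        (∏ j ∈ Finset.range i, ⟪ψ, U j ψ⟫) *
          ⟪ψ, (ordProd U (i + 1) m) (U i ψ - ⟪ψ, U i ψ⟫ • ψ)⟫ := by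
  have h := aux ψ hψ U m m 0 (by omega)
  simp only [Finset.range_eq_Ico]
  convert h using 2 <;> simp [Finset.range_eq_Ico]
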